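/- Let (Ω, μ) be a measure space, let f : Ω → ℝ lie in L³(Ω, μ) with ∫ f³ dμ = 1, and let φ, ψ, χ : Ω → ℝ be measurable and essentially bounded. Set a := ∫ φ·f³ dμ, b := ∫ ψ·f³ dμ, c := ∫ χ·f³ dμ, and Δ(φ) := ‖φ·f − a·f‖_{L³}, Δ(ψ) := ‖ψ·f − b·f‖_{L³}, Δ(χ) := ‖χ·f − c·f‖_{L³}. Then Δ(φ)·Δ(ψ)·Δ(χ) ≥ | ∫ φψχ·f³ dμ − ∫ (a·ψχ + b·φχ + c·φψ)·f³ dμ + 2abc |. -/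

import Mathlib

open MeasureTheory


lemma e32 : (1:ENNReal)/(3/2) = 1/3 + 1/3 := by
  rw [ENNReal.div_add_div_same, one_div, ENNReal.inv_div (by norm_num) (by norm_num)]
  norm_num

lemma e1 : (1:ENNReal)/1 = 1/3 + 1/(3/2) := by
  rw [div_one, one_div (3/2 : ENNReal), ENNReal.inv_div (by norm_num) (by norm_num),
    ENNReal.div_add_div_same, show (1:ENNReal)+2 = 3 from by norm_num]
  exact (ENNReal.div_self (a := 3) (by norm_num) (by norm_num)).symm

lemma holder3 {Ω : Type*} [MeasurableSpace Ω] (μ : Measure Ω) {g₁ g₂ g₃ : Ω → ℝ}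
    (h₁ : MemLp g₁ 3 μ) (h₂ : MemLp g₂ 3 μ) (h₃ : MemLp g₃ 3 μ) :
    |∫ x, g₁ x * g₂ x * g₃ x ∂μ| ≤
      (∫ x, |g₁ x| ^ 3 ∂μ) ^ ((1:ℝ)/3) * (∫ x, |g₂ x| ^ 3 ∂μ) ^ ((1:ℝ)/3) *
        (∫ x, |g₃ x| ^ 3 ∂μ) ^ ((1:ℝ)/3) := by
  have h23 : MemLp (fun x => g₂ x * g₃ x) (3/2) μ := by
    exact h₃.smul h₂ (hpqr := ⟨by simpa [one_div] using e32.symm⟩)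
  have h123 : MemLp (fun x => g₁ x * (g₂ x * g₃ x)) 1 μ := by
    exact h23.smul h₁ (hpqr := ⟨by simpa [one_div] using e1.symm⟩)
  have hint : Integrable (fun x => g₁ x * g₂ x * g₃ x) μ := by
    simpa [mul_assoc] using memLp_one_iff_integrable.mp h123
  -- eLpNorm bound
  have key : eLpNorm (fun x => g₁ x * (g₂ x * g₃ x)) 1 μ ≤
      eLpNorm g₁ 3 μ * (eLpNorm g₂ 3 μ * eLpNorm g₃ 3 μ) := by
    calc eLpNorm (fun x => g₁ x * (g₂ x * g₃ x)) 1 μ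
        ≤ eLpNorm g₁ 3 μ * eLpNorm (fun x => g₂ x * g₃ x) (3/2) μ :=
          (eLpNorm_le_eLpNorm_mul_eLpNorm'_of_norm h₁.aestronglyMeasurable
            h23.aestronglyMeasurable (· * ·) 1
            (Filter.Eventually.of_forall fun x => by simp [abs_mul])
            (hpqr := ⟨by simpa [one_div] using e1.symm⟩)).trans_eq (by simp)
      _ ≤ eLpNorm g₁ 3 μ * (eLpNorm g₂ 3 μ * eLpNorm g₃ 3 μ) := by
          gcongr
          exact (eLpNorm_le_eLpNorm_mul_eLpNorm'_of_norm h₂.aestronglyMeasurable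
            h₃.aestronglyMeasurable (· * ·) 1
            (Filter.Eventually.of_forall fun x => by simp [abs_mul])
            (hpqr := ⟨by simpa [one_div] using e32.symm⟩)).trans_eq (by simp)
  -- convert to real integrals
  have e3 : ∀ (g : Ω → ℝ), MemLp g 3 μ →
      eLpNorm g 3 μ = ENNReal.ofReal ((∫ x, |g x| ^ 3 ∂μ) ^ ((1:ℝ)/3)) := by
    intro g hg
    rw [hg.eLpNorm_eq_integral_rpow_norm (by norm_num) (by norm_num)]
    have habs : ∀ x : ℝ, ‖x‖ ^ ((3:ENNReal).toReal) = |x| ^ 3 := fun x => by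
      rw [ENNReal.toReal_ofNat, Real.norm_eq_abs, ← Real.rpow_natCast |x| 3]; norm_num
    simp_rw [habs]
    norm_num
  have e1' : eLpNorm (fun x => g₁ x * (g₂ x * g₃ x)) 1 μ
      = ENNReal.ofReal (∫ x, |g₁ x * (g₂ x * g₃ x)| ∂μ) := by
    rw [h123.eLpNorm_eq_integral_rpow_norm (by norm_num) (by norm_num)]
    simp [Real.norm_eq_abs, abs_mul]
  rw [e3 g₁ h₁, e3 g₂ h₂, e3 g₃ h₃, e1'] at key
  rw [← ENNReal.ofReal_mul (by positivity), ← ENNReal.ofReal_mul (by positivity)] at key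
  have h0 : (0:ℝ) ≤ ∫ x, |g₁ x * (g₂ x * g₃ x)| ∂μ := integral_nonneg fun x => abs_nonneg _
  have key' : (∫ x, |g₁ x * (g₂ x * g₃ x)| ∂μ) ≤
      (∫ x, |g₁ x| ^ 3 ∂μ) ^ ((1:ℝ)/3) * ((∫ x, |g₂ x| ^ 3 ∂μ) ^ ((1:ℝ)/3) *
        (∫ x, |g₃ x| ^ 3 ∂μ) ^ ((1:ℝ)/3)) := by
    rwa [ENNReal.ofReal_le_ofReal_iff (by positivity)] at key
  calc |∫ x, g₁ x * g₂ x * g₃ x ∂μ| ≤ ∫ x, |g₁ x * g₂ x * g₃ x| ∂μ := by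
        simpa only [Real.norm_eq_abs] using norm_integral_le_integral_norm (μ := μ)
          (f := fun x => g₁ x * g₂ x * g₃ x)
    _ = ∫ x, |g₁ x * (g₂ x * g₃ x)| ∂μ := by simp_rw [mul_assoc]
    _ ≤ _ := by linarith [key']

/-- On `L³(Ω, μ)`, for a state `f` with `∫ f³ = 1` and essentially bounded measurable
multipliers `φ, ψ, χ` with 3-expectations `a, b, c` and 3-uncertainties `Δ(φ), Δ(ψ), Δ(χ)`:
`Δ(φ)Δ(ψ)Δ(χ) ≥ |∫ φψχ f³ dμ − ∫ (aψχ + bφχ + cφψ) f³ dμ + 2abc|`. -/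
theorem L3_uncertainty_product_lower_bound
    {Ω : Type*} [MeasurableSpace Ω] (μ : Measure Ω)
    (f φ ψ χ : Ω → ℝ)
    (hf : MemLp f 3 μ) (hf1 : ∫ x, (f x) ^ 3 ∂μ = 1)
    (hφm : Measurable φ) (hφb : MemLp φ ⊤ μ)
    (hψm : Measurable ψ) (hψb : MemLp ψ ⊤ μ)
    (hχm : Measurable χ) (hχb : MemLp χ ⊤ μ)
    (a b c : ℝ)
    (ha : a = ∫ x, φ x * (f x) ^ 3 ∂μ)
    (hb : b = ∫ x, ψ x * (f x) ^ 3 ∂μ)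
    (hc : c = ∫ x, χ x * (f x) ^ 3 ∂μ)
    (Δφ Δψ Δχ : ℝ)
    (hΔφ : Δφ = (∫ x, |φ x * f x - a * f x| ^ 3 ∂μ) ^ ((1 : ℝ) / 3))
    (hΔψ : Δψ = (∫ x, |ψ x * f x - b * f x| ^ 3 ∂μ) ^ ((1 : ℝ) / 3))
    (hΔχ : Δχ = (∫ x, |χ x * f x - c * f x| ^ 3 ∂μ) ^ ((1 : ℝ) / 3)) :
    Δφ * Δψ * Δχ
      ≥ |(∫ x, φ x * ψ x * χ x * (f x) ^ 3 ∂μ)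
          - (∫ x, (a * (ψ x * χ x) + b * (φ x * χ x) + c * (φ x * ψ x)) * (f x) ^ 3 ∂μ)
          + 2 * a * b * c| := by
  -- membership of centered products in L³
  have hsub : ∀ {θ : Ω → ℝ} (t : ℝ), MemLp θ ⊤ μ →
      MemLp (fun x => (θ x - t) * f x) 3 μ := by
    intro θ t hθ
    have h := MemLp.smul (r := 3) hf (hθ.sub (memLp_top_const t))
    exact h
  have hg1 := hsub a hφb
  have hg2 := hsub b hψb
  have hg3 := hsub c hχb
  -- products of essentially bounded functions
  have hmulinf : ∀ {u v : Ω → ℝ}, MemLp u ⊤ μ → MemLp v ⊤ μ →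
      MemLp (fun x => u x * v x) ⊤ μ := by
    intro u v hu hv
    exact hv.smul hu
  -- f ^ 3 is integrable
  have hf3 : Integrable (fun x => f x ^ 3) μ := by
    have h2 : MemLp (fun x => f x * f x) (3/2) μ := by
      exact hf.smul hf (hpqr := ⟨by simpa [one_div] using e32.symm⟩)
    have h3 : MemLp (fun x => f x * (f x * f x)) 1 μ := by
      exact h2.smul hf (hpqr := ⟨by simpa [one_div] using e1.symm⟩)
    have heq : (fun x => f x * (f x * f x)) = (fun x => f x ^ 3) := by funext x; ring
    rw [heq] at h3
    exact memLp_one_iff_integrable.mp h3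
  -- bounded multiplier times f³ is integrable
  have hbm : ∀ {θ : Ω → ℝ}, MemLp θ ⊤ μ → Integrable (fun x => θ x * f x ^ 3) μ := by
    intro θ hθ
    have h := MemLp.smul (r := 1) (memLp_one_iff_integrable.mpr hf3) hθ
    exact memLp_one_iff_integrable.mp h
  have IA : Integrable (fun x => φ x * ψ x * χ x * f x ^ 3) μ := by
    have := hbm (hmulinf (hmulinf hφb hψb) hχb)
    simpa [mul_assoc] using this
  have IB : Integrable
      (fun x => (a * (ψ x * χ x) + b * (φ x * χ x) + c * (φ x * ψ x)) * f x ^ 3) μ :=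
    hbm ((((hmulinf hψb hχb).const_mul a).add ((hmulinf hφb hχb).const_mul b)).add
      ((hmulinf hφb hψb).const_mul c))
  have ICχ : Integrable (fun x => a * b * (χ x * f x ^ 3)) μ := (hbm hχb).const_mul _
  have ICφ : Integrable (fun x => b * c * (φ x * f x ^ 3)) μ := (hbm hφb).const_mul _
  have ICψ : Integrable (fun x => c * a * (ψ x * f x ^ 3)) μ := (hbm hψb).const_mul _
  have IC : Integrable (fun x => a * b * (χ x * f x ^ 3) + (b * c * (φ x * f x ^ 3)
      + c * a * (ψ x * f x ^ 3))) μ := ICχ.add (ICφ.add ICψ)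
  have ID : Integrable (fun x => a * b * c * f x ^ 3) μ := hf3.const_mul _
  -- value of ∫ C
  have hC : ∫ x, (a * b * (χ x * f x ^ 3) + (b * c * (φ x * f x ^ 3)
      + c * a * (ψ x * f x ^ 3))) ∂μ = 3 * (a * b * c) := by
    calc ∫ x, (a * b * (χ x * f x ^ 3) + (b * c * (φ x * f x ^ 3)
            + c * a * (ψ x * f x ^ 3))) ∂μ
        = (∫ x, a * b * (χ x * f x ^ 3) ∂μ) + ∫ x, (b * c * (φ x * f x ^ 3)
            + c * a * (ψ x * f x ^ 3)) ∂μ := integral_add ICχ (ICφ.add ICψ)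
      _ = (∫ x, a * b * (χ x * f x ^ 3) ∂μ) + ((∫ x, b * c * (φ x * f x ^ 3) ∂μ)
            + ∫ x, c * a * (ψ x * f x ^ 3) ∂μ) := by rw [integral_add ICφ ICψ]
      _ = 3 * (a * b * c) := by
          rw [integral_const_mul, integral_const_mul, integral_const_mul, ← ha, ← hb, ← hc]
          ring
  -- the key expansion
  have hkey : ∫ x, ((φ x - a) * f x) * (((ψ x - b) * f x) * ((χ x - c) * f x)) ∂μ
      = (∫ x, φ x * ψ x * χ x * f x ^ 3 ∂μ)
        - (∫ x, (a * (ψ x * χ x) + b * (φ x * χ x) + c * (φ x * ψ x)) * f x ^ 3 ∂μ)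
        + 2 * a * b * c := by
    have heq : (fun x => ((φ x - a) * f x) * (((ψ x - b) * f x) * ((χ x - c) * f x)))
        = fun x => (φ x * ψ x * χ x * f x ^ 3
            - (a * (ψ x * χ x) + b * (φ x * χ x) + c * (φ x * ψ x)) * f x ^ 3
            + (a * b * (χ x * f x ^ 3) + (b * c * (φ x * f x ^ 3) + c * a * (ψ x * f x ^ 3)))
            - a * b * c * f x ^ 3) := by
      funext x; ring
    rw [heq]
    calc ∫ x, (φ x * ψ x * χ x * f x ^ 3
            - (a * (ψ x * χ x) + b * (φ x * χ x) + c * (φ x * ψ x)) * f x ^ 3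
            + (a * b * (χ x * f x ^ 3) + (b * c * (φ x * f x ^ 3) + c * a * (ψ x * f x ^ 3)))
            - a * b * c * f x ^ 3) ∂μ
        = ∫ x, (φ x * ψ x * χ x * f x ^ 3
            - (a * (ψ x * χ x) + b * (φ x * χ x) + c * (φ x * ψ x)) * f x ^ 3
            + (a * b * (χ x * f x ^ 3) + (b * c * (φ x * f x ^ 3) + c * a * (ψ x * f x ^ 3)))) ∂μ
            - ∫ x, a * b * c * f x ^ 3 ∂μ := integral_sub ((IA.sub IB).add IC) ID
      _ = (∫ x, (φ x * ψ x * χ x * f x ^ 3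
            - (a * (ψ x * χ x) + b * (φ x * χ x) + c * (φ x * ψ x)) * f x ^ 3) ∂μ)
            + (∫ x, (a * b * (χ x * f x ^ 3) + (b * c * (φ x * f x ^ 3)
              + c * a * (ψ x * f x ^ 3))) ∂μ)
            - ∫ x, a * b * c * f x ^ 3 ∂μ := by rw [show ∫ x, (φ x * ψ x * χ x * f x ^ 3
            - (a * (ψ x * χ x) + b * (φ x * χ x) + c * (φ x * ψ x)) * f x ^ 3
            + (a * b * (χ x * f x ^ 3) + (b * c * (φ x * f x ^ 3)
              + c * a * (ψ x * f x ^ 3)))) ∂μ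
          = (∫ x, (φ x * ψ x * χ x * f x ^ 3
            - (a * (ψ x * χ x) + b * (φ x * χ x) + c * (φ x * ψ x)) * f x ^ 3) ∂μ)
            + (∫ x, (a * b * (χ x * f x ^ 3) + (b * c * (φ x * f x ^ 3)
              + c * a * (ψ x * f x ^ 3))) ∂μ) from integral_add (IA.sub IB) IC]

      _ = (∫ x, φ x * ψ x * χ x * f x ^ 3 ∂μ)
            - (∫ x, (a * (ψ x * χ x) + b * (φ x * χ x) + c * (φ x * ψ x)) * f x ^ 3 ∂μ)
            + 3 * (a * b * c) - a * b * c * ∫ x, f x ^ 3 ∂μ := by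
          rw [integral_sub IA IB, hC, integral_const_mul]
      _ = _ := by rw [hf1]; ring
  -- uncertainties as L³ norms of the centered functions
  have hΔφ' : Δφ = (∫ x, |(φ x - a) * f x| ^ 3 ∂μ) ^ ((1:ℝ)/3) := by
    rw [hΔφ]; congr 1; exact integral_congr_ae (Filter.Eventually.of_forall fun x => by
      simp only [sub_mul])
  have hΔψ' : Δψ = (∫ x, |(ψ x - b) * f x| ^ 3 ∂μ) ^ ((1:ℝ)/3) := by
    rw [hΔψ]; congr 1; exact integral_congr_ae (Filter.Eventually.of_forall fun x => by
      simp only [sub_mul])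
  have hΔχ' : Δχ = (∫ x, |(χ x - c) * f x| ^ 3 ∂μ) ^ ((1:ℝ)/3) := by
    rw [hΔχ]; congr 1; exact integral_congr_ae (Filter.Eventually.of_forall fun x => by
      simp only [sub_mul])
  have h := holder3 μ hg1 hg2 hg3
  rw [ge_iff_le, ← hkey]
  calc |∫ x, ((φ x - a) * f x) * (((ψ x - b) * f x) * ((χ x - c) * f x)) ∂μ|
      = |∫ x, ((φ x - a) * f x) * ((ψ x - b) * f x) * ((χ x - c) * f x) ∂μ| := by
        simp_rw [mul_assoc]
    _ ≤ _ := by rw [hΔφ', hΔψ', hΔχ']; exact h
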